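/- Let n ≥ 1 be an integer and let F : ℝ → [0,1] and F_l : ℝ → [0,1] (l ∈ ℕ) be non-increasing functions. Define s := sup{λ ∈ ℝ : F(λ) > 0} and s_l := sup{λ ∈ ℝ : F_l(λ) > 0}, and assume all of these are finite real numbers. Assume moreover: (i) F(λ) > 0 for every λ < s; (ii) for every l, the function λ ↦ F_l(λ)^{1/n} is concave on the interval (−∞, s_l); and (iii) F_l(λ) → F(λ) as l → ∞, for every λ ≠ s. Then s_l → s as l → ∞. -/

import Mathlib

open Filter Topology

/-- If `F, F_l : ℝ → [0,1]` are non-increasing with supports bounded above,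
`s = sup {λ | F λ > 0}` and `s_l = sup {λ | F_l λ > 0}`, `F > 0` on `(-∞, s)`, each
`F_l^{1/n}` is concave on `(-∞, s_l)`, and `F_l → F` pointwise away from `s`, then
`s_l → s`. -/
theorem stmt9 (n : ℕ) (hn : 1 ≤ n) (F : ℝ → ℝ) (Fl : ℕ → ℝ → ℝ)
    (hF01 : ∀ x, F x ∈ Set.Icc (0 : ℝ) 1) (hFl01 : ∀ l x, Fl l x ∈ Set.Icc (0 : ℝ) 1)
    (hFanti : Antitone F) (hFlanti : ∀ l, Antitone (Fl l))
    (hFne : {x : ℝ | 0 < F x}.Nonempty) (hFbdd : BddAbove {x : ℝ | 0 < F x})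
    (hFlne : ∀ l, {x : ℝ | 0 < Fl l x}.Nonempty)
    (hFlbdd : ∀ l, BddAbove {x : ℝ | 0 < Fl l x})
    (s : ℝ) (hs : s = sSup {x : ℝ | 0 < F x})
    (sl : ℕ → ℝ) (hsl : ∀ l, sl l = sSup {x : ℝ | 0 < Fl l x})
    (hpos : ∀ x : ℝ, x < s → 0 < F x)
    (hconc : ∀ l, ConcaveOn ℝ (Set.Iio (sl l)) (fun x => (Fl l x) ^ ((n : ℝ)⁻¹)))
    (hconv : ∀ x : ℝ, x ≠ s → Tendsto (fun l => Fl l x) atTop (nhds (F x))) :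
    Tendsto sl atTop (nhds s) := by

  rw [tendsto_order]
  constructor
  · -- lower bound: a < s → eventually a < sl l
    intro a ha
    set x := (a + s) / 2 with hx
    have hxs : x < s := by rw [hx]; linarith
    have hax : a < x := by rw [hx]; linarith
    have hFx : 0 < F x := hpos x hxs
    filter_upwards [(hconv x hxs.ne).eventually (eventually_gt_nhds hFx)] with l hl
    have hxle : x ≤ sl l := by
      rw [hsl l]
      exact le_csSup (hFlbdd l) hl
    linarith
  · -- upper bound: s < a → eventually sl l < a
    intro a ha
    set e := a - s with he
    have hepos : 0 < e := by rw [he]; linarith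
    set y := s - 1 with hy
    set x := s + e / 2 with hx
    set z := s + 3 * e / 4 with hz
    have hyx : y < x := by rw [hy, hx]; linarith
    have hxz : x < z := by rw [hx, hz]; linarith
    set θ := (z - x) / (z - y) with hθ
    have hzy : (0:ℝ) < z - y := by rw [hz, hy]; linarith
    have hθpos : 0 < θ := by
      apply div_pos _ hzy
      rw [hz, hx]; linarith
    have hθlt : θ < 1 := by
      rw [hθ, div_lt_one hzy]
      linarith
    have hFy : 0 < F y := hpos y (by rw [hy]; linarith)
    have hFx0 : F x = 0 := by
      by_contra h
      have h1 : 0 < F x := lt_of_le_of_ne (hF01 x).1 (Ne.symm h)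
      have h2 : x ≤ s := hs ▸ le_csSup hFbdd h1
      rw [hx] at h2; linarith
    have hne : (n:ℝ) ≠ 0 := Nat.cast_ne_zero.2 (by omega)
    set δ := (θ * (F y / 2) ^ ((n:ℝ)⁻¹)) ^ n with hδ
    have hbase : 0 < θ * (F y / 2) ^ ((n:ℝ)⁻¹) :=
      mul_pos hθpos (Real.rpow_pos_of_pos (by linarith) _)
    have hδpos : 0 < δ := pow_pos hbase n
    have E1 : ∀ᶠ l in atTop, F y / 2 < Fl l y :=
      (hconv y (by rw [hy]; linarith)).eventually (eventually_gt_nhds (by linarith))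
    have E2 : ∀ᶠ l in atTop, Fl l x < δ := by
      have := hconv x (by rw [hx]; intro h; linarith [hepos])
      rw [hFx0] at this
      exact this.eventually (eventually_lt_nhds hδpos)
    filter_upwards [E1, E2] with l h1 h2
    by_contra hcon
    push_neg at hcon
    -- sl l ≥ a, so y, z ∈ Iio (sl l)
    have hyI : y ∈ Set.Iio (sl l) := by
      simp only [Set.mem_Iio]; rw [hy]; linarith [hcon]
    have hzI : z ∈ Set.Iio (sl l) := by
      simp only [Set.mem_Iio]; rw [hz, he]; linarith [hcon]
    have hsum : θ + (1 - θ) = 1 := by ring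
    have hcomb : θ • y + (1 - θ) • z = x := by
      rw [smul_eq_mul, smul_eq_mul]
      field_simp [hθ]
      rw [hθ]; linear_combination (-1 : ℝ) * (div_mul_cancel₀ (z - x) hzy.ne')
    have hcc := (hconc l).2 hyI hzI (le_of_lt hθpos) (by linarith) hsum
    rw [hcomb] at hcc
    -- hcc : θ • (Fl l y)^(1/n) + (1-θ) • (Fl l z)^(1/n) ≤ (Fl l x)^(1/n)
    have hz0 : 0 ≤ (Fl l z) ^ ((n:ℝ)⁻¹) := Real.rpow_nonneg (hFl01 l z).1 _
    have hstep : θ * (F y / 2) ^ ((n:ℝ)⁻¹) ≤ (Fl l x) ^ ((n:ℝ)⁻¹) := by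
      have hmono : (F y / 2) ^ ((n:ℝ)⁻¹) ≤ (Fl l y) ^ ((n:ℝ)⁻¹) :=
        Real.rpow_le_rpow (by linarith) (le_of_lt h1) (by positivity)
      calc θ * (F y / 2) ^ ((n:ℝ)⁻¹) ≤ θ * (Fl l y) ^ ((n:ℝ)⁻¹) := by
            exact mul_le_mul_of_nonneg_left hmono (le_of_lt hθpos)
        _ ≤ θ • (Fl l y) ^ ((n:ℝ)⁻¹) + (1 - θ) • (Fl l z) ^ ((n:ℝ)⁻¹) := by
            rw [smul_eq_mul, smul_eq_mul]
            nlinarith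
        _ ≤ (Fl l x) ^ ((n:ℝ)⁻¹) := hcc
    have hfinal : δ ≤ Fl l x := by
      calc δ = (θ * (F y / 2) ^ ((n:ℝ)⁻¹)) ^ n := hδ
        _ ≤ ((Fl l x) ^ ((n:ℝ)⁻¹)) ^ n := pow_le_pow_left₀ (le_of_lt hbase) hstep n
        _ = Fl l x := Real.rpow_inv_natCast_pow (hFl01 l x).1 (by omega)
    linarith
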